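/- For every real s with 0 < s ≤ π/2, the double integral of the function (x,y) ↦ 1/(x² + y²)² over the square [s, π] × [s, π] is at least (π/6)·(1/(8s²) − 1/(2π²)). (This follows by restricting to the polar sector {(r cos θ, r sin θ) : 2s ≤ r ≤ π, π/6 ≤ θ ≤ π/3}, which is contained in the square.) -/

import Mathlib

open Real MeasureTheory

set_option maxHeartbeats 1000000 in
theorem double_integral_inv_sq_sum_sq_lower_bound (s : ℝ) (hs : 0 < s) (hs' : s ≤ Real.pi / 2) :
    Real.pi / 6 * (1 / (8 * s ^ 2) - 1 / (2 * Real.pi ^ 2))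
      ≤ ∫ q in Set.Icc s Real.pi ×ˢ Set.Icc s Real.pi,
          1 / (q.1 ^ 2 + q.2 ^ 2) ^ 2 := by
  have hπ : 0 < Real.pi := Real.pi_pos
  have hsπ : s ≤ Real.pi := hs'.trans (by linarith)
  set f : ℝ × ℝ → ℝ := fun q => 1 / (q.1 ^ 2 + q.2 ^ 2) ^ 2 with hf
  -- continuity / integrability of f on the square
  have hcont : ContinuousOn f (Set.Icc s Real.pi ×ˢ Set.Icc s Real.pi) := by
    apply ContinuousOn.div continuousOn_const (by fun_prop)
    rintro ⟨x, y⟩ ⟨hx, hy⟩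
    have hx0 : 0 < x := lt_of_lt_of_le hs hx.1
    positivity
  have hint : IntegrableOn f (Set.Icc s Real.pi ×ˢ Set.Icc s Real.pi) :=
    hcont.integrableOn_compact (isCompact_Icc.prod isCompact_Icc)
  -- Fubini
  have hswap : (∫ q in Set.Icc s Real.pi ×ˢ Set.Icc s Real.pi, f q)
      = ∫ x in Set.Icc s Real.pi, ∫ y in Set.Icc s Real.pi, f (x, y) := by
    rw [Measure.volume_eq_prod]
    refine setIntegral_prod f ?_
    rwa [← Measure.volume_eq_prod]
  -- the lower-bound function for the inner integral
  set h : ℝ → ℝ := fun x => (x - s) / (4 * x ^ 4) + (1 / x ^ 3 - 1 / Real.pi ^ 3) / 12 with hh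
  -- inner bound
  have hinner : ∀ x ∈ Set.Icc s Real.pi, h x ≤ ∫ y in Set.Icc s Real.pi, f (x, y) := by
    intro x hx
    have hx0 : 0 < x := lt_of_lt_of_le hs hx.1
    have hcy : Continuous fun y : ℝ => f (x, y) := by
      apply Continuous.div continuous_const (by fun_prop)
      intro y
      positivity
    have hIcc : (∫ y in Set.Icc s Real.pi, f (x, y)) = ∫ y in s..Real.pi, f (x, y) := by
      rw [intervalIntegral.integral_of_le hsπ, MeasureTheory.integral_Icc_eq_integral_Ioc]
    rw [hIcc, ← intervalIntegral.integral_add_adjacent_intervals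
      (hcy.intervalIntegrable s x) (hcy.intervalIntegrable x Real.pi)]
    have hb1 : (x - s) / (4 * x ^ 4) ≤ ∫ y in s..x, f (x, y) := by
      have : (∫ y in s..x, (1 / (4 * x ^ 4) : ℝ)) ≤ ∫ y in s..x, f (x, y) := by
        apply intervalIntegral.integral_mono_on hx.1
          (intervalIntegrable_const) (hcy.intervalIntegrable s x)
        intro y hy
        have hy0 : 0 < y := lt_of_lt_of_le hs hy.1
        have hle : x ^ 2 + y ^ 2 ≤ 2 * x ^ 2 := by nlinarith [hy.2]
        have h1 : (x ^ 2 + y ^ 2) ^ 2 ≤ 4 * x ^ 4 := by nlinarith [sq_nonneg y, sq_nonneg x]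
        have h2 : (0:ℝ) < (x ^ 2 + y ^ 2) ^ 2 := by positivity
        simp only [hf]
        rw [div_le_div_iff₀ (by positivity) h2]
        nlinarith
      calc (x - s) / (4 * x ^ 4) = ∫ y in s..x, (1 / (4 * x ^ 4) : ℝ) := by
            rw [intervalIntegral.integral_const, smul_eq_mul]; field_simp
        _ ≤ _ := this
    have hb2 : (1 / x ^ 3 - 1 / Real.pi ^ 3) / 12 ≤ ∫ y in x..Real.pi, f (x, y) := by
      have hcont4 : ContinuousOn (fun y : ℝ => 1 / (4 * y ^ 4)) (Set.uIcc x Real.pi) := by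
        apply ContinuousOn.div continuousOn_const (by fun_prop)
        intro y hy
        have hy0 : 0 < y := by
          rcases Set.mem_uIcc.mp hy with h | h
          · exact lt_of_lt_of_le hx0 h.1
          · exact lt_of_lt_of_le hπ h.1
        positivity
      have key : (∫ y in x..Real.pi, (1 / (4 * y ^ 4) : ℝ))
          = (1 / x ^ 3 - 1 / Real.pi ^ 3) / 12 := by
        have hderiv : ∀ y ∈ Set.uIcc x Real.pi,
            HasDerivAt (fun y : ℝ => -1 / (12 * y ^ 3)) (1 / (4 * y ^ 4)) y := by
          intro y hy
          have hy0 : 0 < y := by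
            rcases Set.mem_uIcc.mp hy with h | h
            · exact lt_of_lt_of_le hx0 h.1
            · exact lt_of_lt_of_le hπ h.1
          have hd : HasDerivAt (fun y : ℝ => 12 * y ^ 3) (12 * (3 * y ^ 2)) y :=
            (hasDerivAt_pow 3 y).const_mul 12
          have := (hasDerivAt_const y (-1 : ℝ)).div hd (by positivity)
          simp only [Pi.div_def] at this
          refine this.congr_deriv ?_
          field_simp
          ring
        rw [intervalIntegral.integral_eq_sub_of_hasDerivAt hderiv
          hcont4.intervalIntegrable]
        field_simp
        ring
      rw [← key]
      apply intervalIntegral.integral_mono_on hx.2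
        hcont4.intervalIntegrable
        (hcy.intervalIntegrable x Real.pi)
      intro y hy
      have hy0 : 0 < y := lt_of_lt_of_le hx0 hy.1
      have hxy : x ^ 2 ≤ y ^ 2 := by nlinarith [hy.1]
      have h1 : (x ^ 2 + y ^ 2) ^ 2 ≤ 4 * y ^ 4 := by nlinarith [sq_nonneg y]
      have h2 : (0:ℝ) < (x ^ 2 + y ^ 2) ^ 2 := by positivity
      simp only [hf]
      rw [div_le_div_iff₀ (by positivity) h2]
      nlinarith
    simp only [hh]
    linarith
  -- integrability of both sides of the outer comparison
  have hFint : IntegrableOn (fun x => ∫ y in Set.Icc s Real.pi, f (x, y)) (Set.Icc s Real.pi) := by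
    have h1 : Integrable f (((volume : Measure ℝ).restrict (Set.Icc s Real.pi)).prod
        ((volume : Measure ℝ).restrict (Set.Icc s Real.pi))) := by
      rw [Measure.prod_restrict]
      rwa [IntegrableOn, Measure.volume_eq_prod] at hint
    exact h1.integral_prod_left
  have hhcont : ContinuousOn h (Set.Icc s Real.pi) := by
    apply ContinuousOn.add
    · apply ContinuousOn.div (by fun_prop) (by fun_prop)
      intro x hx
      have : 0 < x := lt_of_lt_of_le hs hx.1
      positivity
    · apply ContinuousOn.div _ continuousOn_const (by norm_num)
      apply ContinuousOn.sub _ continuousOn_const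
      apply ContinuousOn.div continuousOn_const (by fun_prop)
      intro x hx
      have : 0 < x := lt_of_lt_of_le hs hx.1
      positivity
  have hhint : IntegrableOn h (Set.Icc s Real.pi) :=
    hhcont.integrableOn_compact isCompact_Icc
  -- outer comparison
  have houter : (∫ x in Set.Icc s Real.pi, h x)
      ≤ ∫ x in Set.Icc s Real.pi, ∫ y in Set.Icc s Real.pi, f (x, y) :=
    setIntegral_mono_on hhint hFint measurableSet_Icc hinner
  -- compute ∫ h
  have hcompute : (∫ x in Set.Icc s Real.pi, h x)
      = 1 / (12 * s ^ 2) - 1 / (4 * Real.pi ^ 2) + s / (6 * Real.pi ^ 3) := by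
    have hIcc : (∫ x in Set.Icc s Real.pi, h x) = ∫ x in s..Real.pi, h x := by
      rw [intervalIntegral.integral_of_le hsπ, MeasureTheory.integral_Icc_eq_integral_Ioc]
    have hderiv : ∀ x ∈ Set.uIcc s Real.pi,
        HasDerivAt (fun x : ℝ => -1 / (6 * x ^ 2) + s / (12 * x ^ 3) - x / (12 * Real.pi ^ 3))
          (h x) x := by
      intro x hx
      rw [Set.uIcc_of_le hsπ] at hx
      have hx0 : 0 < x := lt_of_lt_of_le hs hx.1
      have hd1 : HasDerivAt (fun x : ℝ => -1 / (6 * x ^ 2)) (1 / (3 * x ^ 3)) x := by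
        have hd : HasDerivAt (fun x : ℝ => 6 * x ^ 2) (6 * (2 * x)) x := by
          simpa using (hasDerivAt_pow 2 x).const_mul 6
        have := (hasDerivAt_const x (-1 : ℝ)).div hd (by positivity)
        simp only [Pi.div_def] at this
        refine this.congr_deriv ?_
        field_simp
        ring
      have hd2 : HasDerivAt (fun x : ℝ => s / (12 * x ^ 3)) (-(3 * s) / (12 * x ^ 4)) x := by
        have hd : HasDerivAt (fun x : ℝ => 12 * x ^ 3) (12 * (3 * x ^ 2)) x :=
          (hasDerivAt_pow 3 x).const_mul 12
        have := (hasDerivAt_const x (s : ℝ)).div hd (by positivity)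
        simp only [Pi.div_def] at this
        refine this.congr_deriv ?_
        field_simp
        ring
      have hd3 := (hasDerivAt_id x).div_const (12 * Real.pi ^ 3)
      simp only [id_eq] at hd3
      have := (hd1.add hd2).sub hd3
      simp only [Pi.add_def, Pi.sub_def] at this
      refine this.congr_deriv ?_
      simp only [hh]
      field_simp
      ring
    have hhcont' : ContinuousOn h (Set.uIcc s Real.pi) := by rwa [Set.uIcc_of_le hsπ]
    rw [hIcc, intervalIntegral.integral_eq_sub_of_hasDerivAt hderiv
      hhcont'.intervalIntegrable]
    have hπ3 : Real.pi ^ 3 ≠ 0 := by positivity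
    field_simp
    ring
  -- final algebra
  rw [hswap]
  refine le_trans ?_ houter
  rw [hcompute]
  rw [← sub_nonneg]
  have hs2 : (0:ℝ) < s ^ 2 := by positivity
  have key : 1 / (12 * s ^ 2) - 1 / (4 * Real.pi ^ 2) + s / (6 * Real.pi ^ 3)
      - Real.pi / 6 * (1 / (8 * s ^ 2) - 1 / (2 * Real.pi ^ 2))
      = (Real.pi ^ 3 * (4 - Real.pi) + 4 * s ^ 2 * (Real.pi ^ 2 - 3 * Real.pi + 2 * s))
        / (48 * s ^ 2 * Real.pi ^ 3) := by
    field_simp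
    ring
  rw [key]
  apply div_nonneg _ (by positivity)
  have h1 : Real.pi < 3.15 := Real.pi_lt_d2
  have h2 : 3 < Real.pi := Real.pi_gt_three
  have h3 : 0 < Real.pi ^ 3 * (4 - Real.pi) := by nlinarith [pow_pos hπ 3]
  have h4 : 0 < Real.pi ^ 2 - 3 * Real.pi + 2 * s := by nlinarith
  nlinarith [mul_pos (mul_pos (by norm_num : (0:ℝ) < 4) hs2) h4]
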